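/- Suppose there exists a real number α such that Q'(r)·(U(r) − α) ≤ 0 for every r ∈ [r_i, r_o] (i.e. the Kelvin–Arnol'd I / Batchelor–Gill condition W_{α,N} = rQ'/(U−α) ≤ 0 holds). Then G(r) = 0 for all r ∈ [r_i, r_o]; that is, the Rayleigh-type equation admits no nontrivial solution with Im c ≠ 0, so the flow is stable to such disturbances. -/

import Mathlib

open Real MeasureTheory

/-- Kelvin–Arnol'd I / Batchelor–Gill sufficient condition for stability of
axisymmetric base flows in an annulus: if there exists `α` with
`Q'(r) * (U r - α) ≤ 0` on `[ri, ro]`, then the Rayleigh-type equation has no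
nontrivial solution with `Im c ≠ 0`. -/
theorem stmt_0
    (ri ro : ℝ) (hri : 0 < ri) (hio : ri < ro)
    (N k : ℝ) (hN : 0 ≤ N) (hk : 0 < k)
    (c : ℂ) (hc : c.im ≠ 0)
    (U Q : ℝ → ℝ)
    (hU : ContDiffOn ℝ 2 U (Set.Icc ri ro))
    (hQ : ∀ r, Q r = -(r * deriv U r) / (N ^ 2 + r ^ 2))
    (G : ℝ → ℂ)
    (hG : ContDiffOn ℝ 2 G (Set.Icc ri ro))
    (hGi : G ri = 0) (hGo : G ro = 0)
    (heq : ∀ r ∈ Set.Icc ri ro,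
      deriv (fun s : ℝ => ((s / (N ^ 2 + s ^ 2) : ℝ) : ℂ) *
          deriv (fun t : ℝ => (t : ℂ) * G t) s) r
        - (k : ℂ) ^ 2 * G r
        + ((deriv Q r : ℝ) : ℂ) / ((U r : ℂ) - c) * ((r : ℂ) * G r) = 0)
    (α : ℝ)
    (hKA : ∀ r ∈ Set.Icc ri ro, deriv Q r * (U r - α) ≤ 0) :
    ∀ r ∈ Set.Icc ri ro, G r = 0 := by
  set S : Set ℝ := Set.Icc ri ro with hS
  have hUD : UniqueDiffOn ℝ S := uniqueDiffOn_Icc hio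
  have hden : ∀ r ∈ S, N ^ 2 + r ^ 2 ≠ 0 := by
    intro r hr
    have : 0 < r := lt_of_lt_of_le hri hr.1
    positivity
  set p : ℝ → ℝ := fun r => r / (N ^ 2 + r ^ 2) with hp
  have hpC : ContDiffOn ℝ 2 p S := by
    apply ContDiffOn.div contDiffOn_id
    · exact (contDiff_const.add (contDiff_id.pow 2)).contDiffOn
    · exact hden
  set H : ℝ → ℂ := fun t => (t : ℂ) * G t with hH
  have hHC : ContDiffOn ℝ 2 H S :=
    (Complex.ofRealCLM.contDiff.contDiffOn (n := 2)).mul hG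
  set g : ℝ → ℂ := derivWithin H S with hg
  have hgC : ContDiffOn ℝ 1 g S := hHC.derivWithin hUD (by norm_num)
  have hmemN : ∀ x ∈ Set.Ioo ri ro, S ∈ nhds x := fun x hx => Icc_mem_nhds hx.1 hx.2
  have hgeq : ∀ x ∈ Set.Ioo ri ro, g x = deriv H x := fun x hx =>
    derivWithin_of_mem_nhds (hmemN x hx)
  -- phi
  set φ : ℝ → ℂ := fun s => ((p s : ℝ) : ℂ) * g s with hφ
  have hφC : ContDiffOn ℝ 1 φ S :=
    ((Complex.ofRealCLM.contDiff.comp_contDiffOn (hpC.of_le (by norm_num)))).mul hgC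
  -- u1 and Q-tilde, q1
  set u1 : ℝ → ℝ := derivWithin U S with hu1
  have hu1C : ContDiffOn ℝ 1 u1 S := hU.derivWithin hUD (by norm_num)
  set Qt : ℝ → ℝ := fun r => -(r * u1 r) / (N ^ 2 + r ^ 2) with hQt
  have hQtC : ContDiffOn ℝ 1 Qt S := by
    apply ContDiffOn.div
    · exact (contDiffOn_id.mul hu1C).neg
    · exact (contDiff_const.add (contDiff_id.pow 2)).contDiffOn
    · exact hden
  set q1 : ℝ → ℝ := derivWithin Qt S with hq1
  have hq1cont : ContinuousOn q1 S := hQtC.continuousOn_derivWithin hUD (by norm_num)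
  have hQeqQt : ∀ x ∈ Set.Ioo ri ro, Q x = Qt x := by
    intro x hx
    have h6 : deriv U x = u1 x := (derivWithin_of_mem_nhds (hmemN x hx)).symm
    rw [hQ, hQt, h6]
  have hq1eq : ∀ x ∈ Set.Ioo ri ro, deriv Q x = q1 x := by
    intro x hx
    have h1 : Q =ᶠ[nhds x] Qt := by
      filter_upwards [Ioo_mem_nhds hx.1 hx.2] with y hy
      exact hQeqQt y hy
    rw [h1.deriv_eq, hq1, derivWithin_of_mem_nhds (hmemN x hx)]
  -- F and its derivative
  set F : ℝ → ℂ := fun r => φ r * (starRingEnd ℂ) (H r) with hF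
  -- the claimed derivative
  set f : ℝ → ℝ := fun r => k ^ 2 * r * Complex.normSq (G r) + p r * Complex.normSq (g r)
    with hfdef
  set W : ℝ → ℂ := fun r =>
    ((f r : ℝ) : ℂ)
      - ((q1 r : ℝ) : ℂ) * ((Complex.normSq (H r) : ℝ) : ℂ) / ((U r : ℂ) - c) with hW
  have hderiv : ∀ x ∈ Set.Ioo ri ro, HasDerivAt F (W x) x := by
    intro x hx
    have hxS : x ∈ S := Set.Ioo_subset_Icc_self hx
    have hφd : HasDerivAt φ (derivWithin φ S x) x :=
      (((hφC.differentiableOn (by norm_num)) x hxS).hasDerivWithinAt).hasDerivAt (hmemN x hx)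
    have hHd : HasDerivAt H (g x) x :=
      (((hHC.differentiableOn (by norm_num)) x hxS).hasDerivWithinAt).hasDerivAt (hmemN x hx)
    have hHds : HasDerivAt (fun r => (starRingEnd ℂ) (H r)) ((starRingEnd ℂ) (g x)) x := hHd.star
    have h1 : HasDerivAt F (derivWithin φ S x * (starRingEnd ℂ) (H x)
        + φ x * (starRingEnd ℂ) (g x)) x := hφd.mul hHds
    -- compute derivWithin φ S x from the equation
    have h2 : derivWithin φ S x
        = (k : ℂ) ^ 2 * G x - ((deriv Q x : ℝ) : ℂ) / ((U x : ℂ) - c) * ((x : ℂ) * G x) := by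
      have h3 : (fun s : ℝ => ((s / (N ^ 2 + s ^ 2) : ℝ) : ℂ) *
          deriv (fun t : ℝ => (t : ℂ) * G t) s) =ᶠ[nhds x] φ := by
        filter_upwards [Ioo_mem_nhds hx.1 hx.2] with y hy
        rw [hφ]
        simp only [hp, ← hgeq y hy, hH]
        rw [hgeq y hy]
      have h4 := heq x hxS
      have h5 : derivWithin φ S x = deriv (fun s : ℝ => ((s / (N ^ 2 + s ^ 2) : ℝ) : ℂ) *
          deriv (fun t : ℝ => (t : ℂ) * G t) s) x := by
        rw [derivWithin_of_mem_nhds (hmemN x hx)]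
        exact h3.deriv_eq.symm
      rw [h5]
      linear_combination h4
    rw [h2, hq1eq x hx] at h1
    convert h1 using 1
    have hconj : (starRingEnd ℂ) ((x:ℂ) * G x) = (x:ℂ) * (starRingEnd ℂ) (G x) := by
      simp [map_mul, Complex.conj_ofReal]
    have hns1 : (G x) * (starRingEnd ℂ) (G x) = (Complex.normSq (G x) : ℝ) := Complex.mul_conj _
    have hns3 : (g x) * (starRingEnd ℂ) (g x) = (Complex.normSq (g x) : ℝ) := Complex.mul_conj _
    have e1 : ((Complex.normSq (H x) : ℝ) : ℂ) = (x:ℂ)^2 * ((Complex.normSq (G x) : ℝ) : ℂ) := by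
      rw [hH]
      simp only [Complex.normSq_mul, Complex.normSq_ofReal]
      push_cast
      ring
    rw [hW, hφ, hH, hfdef]
    simp only
    rw [e1, hconj]
    push_cast
    linear_combination (-((k:ℂ)^2*(x:ℂ)) + ((q1 x : ℝ):ℂ)*(x:ℂ)^2/((U x:ℂ) - c)) * hns1 - ((p x : ℝ):ℂ) * hns3
  -- auxiliary positive quantities
  have hzS : ∀ r : ℝ, ((U r : ℂ) - c) ≠ 0 := by
    intro r h
    apply hc
    have := congrArg Complex.im h
    simpa using this.symm
  have hc2 : 0 < c.im ^ 2 := by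
    rcases hc.lt_or_gt with h | h <;> nlinarith
  set nsw : ℝ → ℝ := fun r => (U r - c.re) ^ 2 + c.im ^ 2 with hnswdef
  have hnswpos : ∀ r, 0 < nsw r := by
    intro r
    have := sq_nonneg (U r - c.re)
    simp only [hnswdef]
    linarith
  have hnsweq : ∀ r, Complex.normSq ((U r : ℂ) - c) = nsw r := by
    intro r
    simp [Complex.normSq_apply, hnswdef]
    ring
  set J : ℝ → ℝ := fun r => q1 r * Complex.normSq (H r) / nsw r with hJdef
  -- real and imaginary parts of W
  have hWim : ∀ x, (W x).im = -c.im * J x := by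
    intro x
    simp only [hW, hJdef, Complex.sub_im, Complex.ofReal_im, Complex.div_im, Complex.mul_im,
      Complex.mul_re, Complex.ofReal_re, Complex.sub_re, Complex.sub_im, hnsweq]
    have := (hnswpos x).ne'
    field_simp
    try ring
    try exact Or.inl trivial
  have hWre : ∀ x, (W x).re = f x - J x * (U x - c.re) := by
    intro x
    simp only [hW, hJdef, Complex.sub_re, Complex.ofReal_re, Complex.div_re, Complex.mul_im,
      Complex.mul_re, Complex.ofReal_im, Complex.sub_im, hnsweq]
    have := (hnswpos x).ne'
    field_simp
    try ring
    try exact Or.inl trivial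
  -- continuity facts
  have hnormSqC : Continuous (Complex.normSq : ℂ → ℝ) := Complex.continuous_normSq
  have hfcont : ContinuousOn f S := by
    apply ContinuousOn.add
    · exact (continuousOn_const.mul continuousOn_id).mul
        (hnormSqC.comp_continuousOn (hG.continuousOn))
    · exact (hpC.continuousOn).mul (hnormSqC.comp_continuousOn (hgC.continuousOn))
  have hJcont : ContinuousOn J S := by
    apply ContinuousOn.div
    · exact hq1cont.mul (hnormSqC.comp_continuousOn (hHC.continuousOn))
    · exact ((hU.continuousOn.sub continuousOn_const).pow 2).add continuousOn_const
    · exact fun r _ => (hnswpos r).ne'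
  have hUcont : ContinuousOn U S := hU.continuousOn
  have hWcont : ContinuousOn W S := by
    apply ContinuousOn.sub
    · exact Complex.continuous_ofReal.comp_continuousOn hfcont
    · apply ContinuousOn.div
      · exact (Complex.continuous_ofReal.comp_continuousOn hq1cont).mul
          (Complex.continuous_ofReal.comp_continuousOn
            (hnormSqC.comp_continuousOn hHC.continuousOn))
      · exact (Complex.continuous_ofReal.comp_continuousOn hUcont).sub continuousOn_const
      · exact fun r _ => hzS r
  have hFcont : ContinuousOn F S :=
    (hφC.continuousOn).mul (continuous_star.comp_continuousOn hHC.continuousOn)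
  -- FTC
  have hWintI : IntervalIntegrable W volume ri ro := by
    apply ContinuousOn.intervalIntegrable
    rwa [Set.uIcc_of_le hio.le]
  have hFTC : ∫ x in ri..ro, W x = F ro - F ri :=
    intervalIntegral.integral_eq_sub_of_hasDeriv_right_of_le hio.le hFcont
      (fun x hx => (hderiv x hx).hasDerivWithinAt) hWintI
  have hF0 : ∫ x in ri..ro, W x = 0 := by
    rw [hFTC, hF]
    simp only [hH]
    rw [hGi, hGo]
    simp
  -- pass to the restricted measure on Ioo
  set μ : Measure ℝ := volume.restrict (Set.Ioo ri ro) with hμdef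
  have hresteq : volume.restrict (Set.Ioo ri ro) = volume.restrict (Set.Ioc ri ro) :=
    Measure.restrict_congr_set Ioo_ae_eq_Ioc
  have h0 : ∫ x, W x ∂μ = 0 := by
    rw [hμdef, hresteq]
    rw [intervalIntegral.integral_of_le hio.le] at hF0
    exact hF0
  -- integrability over μ
  have hIooIcc : Set.Ioo ri ro ⊆ S := Set.Ioo_subset_Icc_self
  have hWμ : Integrable W μ := (hWcont.integrableOn_Icc).mono_set Set.Ioo_subset_Icc_self
  have hfμ : Integrable f μ := (hfcont.integrableOn_Icc).mono_set Set.Ioo_subset_Icc_self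
  have hJμ : Integrable J μ := (hJcont.integrableOn_Icc).mono_set Set.Ioo_subset_Icc_self
  have hJUαμ : Integrable (fun x => J x * (U x - α)) μ :=
    ((hJcont.mul (hUcont.sub continuousOn_const)).integrableOn_Icc).mono_set
      Set.Ioo_subset_Icc_self
  have hJUcμ : Integrable (fun x => J x * (U x - c.re)) μ :=
    ((hJcont.mul (hUcont.sub continuousOn_const)).integrableOn_Icc).mono_set
      Set.Ioo_subset_Icc_self
  -- imaginary part: ∫ J = 0
  have him : ∫ x, (W x).im ∂μ = 0 := by
    have h1 := _root_.integral_im (μ := μ) hWμ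
    simp only [RCLike.im_to_complex] at h1
    rw [h1, h0]
    simp
  have hJ0 : ∫ x, J x ∂μ = 0 := by
    have h2 : ∫ x, -c.im * J x ∂μ = 0 := by
      rw [← him]
      congr 1
      funext x
      exact (hWim x).symm
    rw [integral_const_mul] at h2
    rcases mul_eq_zero.mp h2 with h | h
    · exact absurd (neg_eq_zero.mp h) hc
    · exact h
  -- real part
  have hre : ∫ x, (f x - J x * (U x - c.re)) ∂μ = 0 := by
    have h1 := _root_.integral_re (μ := μ) hWμ
    simp only [RCLike.re_to_complex] at h1
    have h2 : ∫ x, (W x).re ∂μ = 0 := by rw [h1, h0]; simp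
    rw [← h2]
    congr 1
    funext x
    exact (hWre x).symm
  have hfI : ∫ x, f x ∂μ = ∫ x, J x * (U x - c.re) ∂μ := by
    have := MeasureTheory.integral_sub hfμ hJUcμ
    rw [hre] at this
    linarith [this.symm]
  -- split using α
  have hsplit : ∫ x, J x * (U x - c.re) ∂μ = ∫ x, J x * (U x - α) ∂μ := by
    have h3 : (fun x => J x * (U x - c.re))
        = fun x => J x * (U x - α) + (α - c.re) * J x := by
      funext x; ring
    rw [h3, MeasureTheory.integral_add hJUαμ (hJμ.const_mul _), integral_const_mul, hJ0]
    ring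
  have hneg : ∫ x, J x * (U x - α) ∂μ ≤ 0 := by
    apply MeasureTheory.integral_nonpos_of_ae
    rw [hμdef]
    refine (MeasureTheory.ae_restrict_iff' measurableSet_Ioo).mpr ?_
    apply Filter.Eventually.of_forall
    intro x hx
    show J x * (U x - α) ≤ 0
    have hxS : x ∈ S := hIooIcc hx
    have h4 : J x * (U x - α)
        = (deriv Q x * (U x - α)) * (Complex.normSq (H x) / nsw x) := by
      simp only [hJdef]
      rw [hq1eq x hx]
      ring
    rw [h4]
    apply mul_nonpos_iff.mpr
    right
    exact ⟨hKA x hxS, div_nonneg (Complex.normSq_nonneg _) (hnswpos x).le⟩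
  have hfle : ∫ x, f x ∂μ ≤ 0 := by rw [hfI, hsplit]; exact hneg
  -- f is nonneg a.e. on μ
  have hfnonneg : ∀ x ∈ Set.Ioo ri ro, 0 ≤ f x := by
    intro x hx
    have hx0 : 0 < x := hri.trans hx.1
    have h5 : 0 ≤ p x := by
      rw [hp]
      positivity
    have h6 : 0 ≤ k ^ 2 * x * Complex.normSq (G x) :=
      mul_nonneg (mul_nonneg (sq_nonneg k) hx0.le) (Complex.normSq_nonneg _)
    have h7 : 0 ≤ p x * Complex.normSq (g x) := mul_nonneg h5 (Complex.normSq_nonneg _)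
    simp only [hfdef]
    linarith
  have hfae : 0 ≤ᵐ[μ] f := by
    rw [hμdef]
    refine (MeasureTheory.ae_restrict_iff' measurableSet_Ioo).mpr ?_
    exact Filter.Eventually.of_forall hfnonneg
  have hf0 : ∫ x, f x ∂μ = 0 :=
    le_antisymm hfle (MeasureTheory.integral_nonneg_of_ae hfae)
  have hfzero : f =ᵐ[μ] 0 :=
    (MeasureTheory.integral_eq_zero_iff_of_nonneg_ae hfae hfμ).mp hf0
  -- conclude G = 0 on the open interval
  have hGIoo : ∀ x ∈ Set.Ioo ri ro, G x = 0 := by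
    intro x hx
    by_contra hGx
    have hx0 : 0 < x := hri.trans hx.1
    have hnsG : 0 < Complex.normSq (G x) := Complex.normSq_pos.mpr hGx
    have h5 : 0 ≤ p x := by rw [hp]; positivity
    have hfx : 0 < f x := by
      have h6 : 0 < k ^ 2 * x * Complex.normSq (G x) :=
        mul_pos (mul_pos (pow_pos hk 2) hx0) hnsG
      have h7 : 0 ≤ p x * Complex.normSq (g x) := mul_nonneg h5 (Complex.normSq_nonneg _)
      simp only [hfdef]
      linarith
    have hct : ContinuousAt f x := hfcont.continuousAt (hmemN x hx)
    have hT : (f ⁻¹' Set.Ioi 0) ∩ Set.Ioo ri ro ∈ nhds x :=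
      Filter.inter_mem (hct (Ioi_mem_nhds hfx)) (Ioo_mem_nhds hx.1 hx.2)
    obtain ⟨l, u, hlu, hsub⟩ := mem_nhds_iff_exists_Ioo_subset.mp hT
    have hnull : μ {a | f a ≠ 0} = 0 := by
      have := hfzero
      rw [Filter.EventuallyEq, MeasureTheory.ae_iff] at this
      simpa using this
    have hsub2 : Set.Ioo l u ⊆ {a | f a ≠ 0} := by
      intro y hy
      exact (hsub hy).1.ne'
    have hle : μ (Set.Ioo l u) ≤ 0 := hnull ▸ measure_mono hsub2
    have hμIoo : μ (Set.Ioo l u) = volume (Set.Ioo l u) := by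
      rw [hμdef, Measure.restrict_apply measurableSet_Ioo,
        Set.inter_eq_self_of_subset_left (fun y hy => (hsub hy).2)]
    rw [hμIoo, Real.volume_Ioo] at hle
    have : (0:ℝ) < u - l := by linarith [hlu.1, hlu.2]
    simp [ENNReal.ofReal_eq_zero] at hle
    linarith
  intro r hr
  rcases eq_or_lt_of_le hr.1 with h | h
  · rw [← h]; exact hGi
  rcases eq_or_lt_of_le hr.2 with h2 | h2
  · rw [h2]; exact hGo
  exact hGIoo r ⟨h, h2⟩
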